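/- Define B(2n) = Σ_{k=0}^{n−1} ([n choose k]_2)^2 · 2^{(n−k)^2} · (2^k)! · 2^{(2n−2k+1)·2^k} · ∏_{i=0}^{n−k−1} (2^{n−k} − 2^i)^{2^k}. Then (2^n − 1)^2 · 2^{3·2^{n−1}+1} · (2^{n−1})! ≤ B(2n) for all n ≥ 1, and B(2n) < 2^{3·2^{n−1}+2n+1} · (2^{n−1})! for all n ≥ 7. -/

import Mathlib

def gb (n k : ℕ) : ℚ := ∏ i ∈ Finset.range k, (((2:ℚ)^n - 2^i) / ((2:ℚ)^k - 2^i))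

def Tterm (n k : ℕ) : ℚ :=
  (gb n k)^2 * 2^((n-k)^2) * (2^k).factorial * 2^((2*n-2*k+1)*2^k) *
      ∏ i ∈ Finset.range (n-k), ((2:ℚ)^(n-k) - 2^i)^(2^k)

def Bfun (n : ℕ) : ℚ :=
  ∑ k ∈ Finset.range n,
    (gb n k)^2 * 2^((n-k)^2) * (2^k).factorial * 2^((2*n-2*k+1)*2^k) *
      ∏ i ∈ Finset.range (n-k), ((2:ℚ)^(n-k) - 2^i)^(2^k)

lemma Bfun_eq (n : ℕ) : Bfun n = ∑ k ∈ Finset.range n, Tterm n k := rfl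

lemma two_pow_sub_pos {i k : ℕ} (h : i < k) : (0:ℚ) < 2^k - 2^i := by
  have : (2:ℚ)^i < 2^k := by
    exact pow_lt_pow_right₀ (by norm_num) h
  linarith

lemma two_pow_sub_nonneg {i k : ℕ} (h : i ≤ k) : (0:ℚ) ≤ 2^k - 2^i := by
  have : (2:ℚ)^i ≤ 2^k := by
    exact pow_le_pow_right₀ (by norm_num) h
  linarith

lemma Tterm_nonneg (n k : ℕ) : 0 ≤ Tterm n k := by
  unfold Tterm
  have h1 : (0:ℚ) ≤ (gb n k)^2 := sq_nonneg _
  have h2 : (0:ℚ) ≤ ∏ i ∈ Finset.range (n-k), ((2:ℚ)^(n-k) - 2^i)^(2^k) := by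
    apply Finset.prod_nonneg
    intro i hi
    exact pow_nonneg (two_pow_sub_nonneg (le_of_lt (Finset.mem_range.mp hi))) _
  positivity

lemma key_prod (m : ℕ) :
    ∏ i ∈ Finset.range m, ((2:ℚ)^(m+1) - 2^i)
      = (2^(m+1)-1) * ∏ i ∈ Finset.range m, ((2:ℚ)^m - 2^i) := by
  induction m with
  | zero => norm_num
  | succ m ih =>
    rw [Finset.prod_range_succ' (fun i => ((2:ℚ)^(m+1+1) - 2^i)) m]
    rw [Finset.prod_range_succ' (fun i => ((2:ℚ)^(m+1) - 2^i)) m]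
    have e1 : ∀ i : ℕ, ((2:ℚ)^(m+1+1) - 2^(i+1)) = 2 * ((2:ℚ)^(m+1) - 2^i) := by
      intro i; rw [pow_succ, pow_succ]; ring
    have e2 : ∀ i : ℕ, ((2:ℚ)^(m+1) - 2^(i+1)) = 2 * ((2:ℚ)^m - 2^i) := by
      intro i; rw [pow_succ, pow_succ]; ring
    simp only [e1, e2, Finset.prod_mul_distrib, Finset.prod_const, ih]
    ring

lemma gb_top (m : ℕ) : gb (m+1) m = 2^(m+1) - 1 := by
  unfold gb
  rw [Finset.prod_div_distrib, key_prod]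
  have hne : ∏ i ∈ Finset.range m, ((2:ℚ)^m - 2^i) ≠ 0 := by
    apply Finset.prod_ne_zero_iff.mpr
    intro i hi
    exact ne_of_gt (two_pow_sub_pos (Finset.mem_range.mp hi))
  field_simp

lemma Tterm_top (m : ℕ) :
    Tterm (m+1) m = ((2:ℚ)^(m+1) - 1)^2 * 2^(3*2^m+1) * (2^m).factorial := by
  unfold Tterm
  rw [gb_top]
  have h1 : m + 1 - m = 1 := by omega
  have h2 : 2*(m+1) - 2*m + 1 = 3 := by omega
  rw [h1, h2]
  simp only [Finset.prod_range_one, pow_zero, pow_one]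
  norm_num
  rw [pow_add]
  ring




-- L1
lemma L1 (j : ℕ) : 4*(j+3)^2 ≤ 9*2^(j+2) := by
  induction j with
  | zero => norm_num
  | succ j ih =>
    have h : 4*(j+1+3)^2 ≤ 2*(4*(j+3)^2) := by nlinarith [sq_nonneg j, Nat.zero_le j]
    calc 4*(j+1+3)^2 ≤ 2*(4*(j+3)^2) := h
    _ ≤ 2*(9*2^(j+2)) := by omega
    _ = 9*2^(j+1+2) := by ring

-- L2
lemma L2 (j : ℕ) : (j+7)^2+2*(j+7)+5*2^(j+5) ≤ 2+(j+7)*2^(j+5) := by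
  induction j with
  | zero => norm_num
  | succ j ih =>
    have hx : 32 ≤ 2^(j+5) := by
      calc (32:ℕ) = 2^5 := by norm_num
      _ ≤ 2^(j+5) := Nat.pow_le_pow_right (by norm_num) (by omega)
    have e : 2^(j+1+5) = 2*2^(j+5) := by ring
    rw [e]
    nlinarith [ih, hx]





lemma exp_bound (n k : ℕ) (hn : 7 ≤ n) (hk : k + 2 ≤ n) :
    2*(k*(n-k+1)) + (n-k)^2 + (2*n-2*k+1)*2^k + (n-k)*2^k*(n-k)
      ≤ 3*2^(n-1) + 2 + (n-2)*2^(n-2) := by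
  obtain ⟨m, hm2, hkm⟩ : ∃ m, 2 ≤ m ∧ k + m = n := ⟨n - k, by omega, by omega⟩
  subst hkm
  have e1 : k + m - k = m := by omega
  have e2 : k + m - k + 1 = m + 1 := by omega
  have e3 : 2*(k+m) - 2*k + 1 = 2*m+1 := by omega
  rw [e1, e3]
  -- (2m+1)*2^k + m*2^k*m = (m+1)^2 * 2^k
  have h1 : (2*m+1)*2^k + m*2^k*m = (m+1)^2 * 2^k := by ring
  -- (m+1)^2*2^k ≤ 9*2^(n-2)
  have hL1 : 4*(m+1)^2 ≤ 9*2^m := by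
    have := L1 (m-2)
    have em : m - 2 + 3 = m + 1 := by omega
    have em2 : m - 2 + 2 = m := by omega
    rwa [em, em2] at this
  have h2 : (m+1)^2 * 2^k ≤ 9 * 2^(k+m-2) := by
    have step : 4*((m+1)^2 * 2^k) ≤ 4*(9*2^(k+m-2)) := by
      calc 4*((m+1)^2 * 2^k) = (4*(m+1)^2) * 2^k := by ring
      _ ≤ (9*2^m) * 2^k := Nat.mul_le_mul_right _ hL1
      _ = 9*(2^m*2^k) := by ring
      _ = 9*2^(m+k) := by rw [pow_add]
      _ = 9*(2^(k+m-2)*2^2) := by rw [← pow_add]; congr 2; omega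
      _ = 4*(9*2^(k+m-2)) := by ring
    omega
  have h3 : 2*(k*(m+1)) + m^2 ≤ (k+m)^2 + 2*(k+m) := by nlinarith [sq_nonneg k, Nat.zero_le (k*m)]
  -- L2 instance
  have hL2 : (k+m)^2 + 2*(k+m) + 5*2^(k+m-2) ≤ 2 + (k+m)*2^(k+m-2) := by
    have := L2 (k+m-7)
    have e4 : k+m-7+7 = k+m := by omega
    have e5 : k+m-7+5 = k+m-2 := by omega
    rwa [e4, e5] at this
  have e6 : 3*2^(k+m-1) = 6*2^(k+m-2) := by
    have : k+m-1 = (k+m-2)+1 := by omega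
    rw [this, pow_succ]; ring
  -- combine
  have h4 : (k+m-2)*2^(k+m-2) + 2*2^(k+m-2) = (k+m)*2^(k+m-2) := by
    have : k+m-2+2 = k+m := by omega
    calc (k+m-2)*2^(k+m-2) + 2*2^(k+m-2) = (k+m-2+2)*2^(k+m-2) := by ring
    _ = (k+m)*2^(k+m-2) := by rw [this]
  linarith [h1, h2, h3, hL2, e6, h4]

lemma nat_bound (n k : ℕ) (hn : 7 ≤ n) (hk : k + 2 ≤ n) :
    2^(2*(k*(n-k+1)) + (n-k)^2 + (2*n-2*k+1)*2^k + (n-k)*2^k*(n-k)) * (2^k).factorial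
      ≤ 2^(3*2^(n-1)+2) * (2^(n-1)).factorial := by
  have hfac : (2^k).factorial ≤ (2^(n-2)).factorial :=
    Nat.factorial_le (Nat.pow_le_pow_right (by norm_num) (by omega))
  have hpow : 2^(2*(k*(n-k+1)) + (n-k)^2 + (2*n-2*k+1)*2^k + (n-k)*2^k*(n-k))
      ≤ 2^(3*2^(n-1) + 2 + (n-2)*2^(n-2)) :=
    Nat.pow_le_pow_right (by norm_num) (exp_bound n k hn hk)
  calc 2^(2*(k*(n-k+1)) + (n-k)^2 + (2*n-2*k+1)*2^k + (n-k)*2^k*(n-k)) * (2^k).factorial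
      ≤ 2^(3*2^(n-1) + 2 + (n-2)*2^(n-2)) * (2^(n-2)).factorial :=
        Nat.mul_le_mul hpow hfac
    _ = 2^(3*2^(n-1)+2) * (2^((n-2)*2^(n-2)) * (2^(n-2)).factorial) := by
        rw [pow_add, mul_assoc]
    _ ≤ 2^(3*2^(n-1)+2) * (2^(n-1)).factorial := by
        apply Nat.mul_le_mul_left
        calc 2^((n-2)*2^(n-2)) * (2^(n-2)).factorial
            = (2^(n-2))^(2^(n-2)) * (2^(n-2)).factorial := by rw [← pow_mul]
          _ ≤ (2^(n-2)+1)^(2^(n-2)) * (2^(n-2)).factorial :=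
              Nat.mul_le_mul_right _ (Nat.pow_le_pow_left (by omega) _)
          _ = (2^(n-2)).factorial * (2^(n-2)+1)^(2^(n-2)) := by ring
          _ ≤ (2^(n-2) + 2^(n-2)).factorial := Nat.factorial_mul_pow_le_factorial
          _ = (2^(n-1)).factorial := by
              congr 1
              have : n - 1 = (n-2)+1 := by omega
              rw [this, pow_succ]; ring

lemma gb_nonneg (n k : ℕ) (h : k ≤ n) : 0 ≤ gb n k := by
  apply Finset.prod_nonneg
  intro i hi
  have hik := Finset.mem_range.mp hi
  exact div_nonneg (two_pow_sub_nonneg (by omega)) (le_of_lt (two_pow_sub_pos hik))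

lemma gb_le (n k : ℕ) (h : k ≤ n) : gb n k ≤ 2^(k*(n-k+1)) := by
  unfold gb
  calc ∏ i ∈ Finset.range k, (((2:ℚ)^n - 2^i) / ((2:ℚ)^k - 2^i))
      ≤ ∏ _i ∈ Finset.range k, (2:ℚ)^(n-k+1) := by
        apply Finset.prod_le_prod
        · intro i hi
          have hik := Finset.mem_range.mp hi
          exact div_nonneg (two_pow_sub_nonneg (by omega)) (le_of_lt (two_pow_sub_pos hik))
        · intro i hi
          have hik := Finset.mem_range.mp hi
          rw [div_le_iff₀ (two_pow_sub_pos hik)]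
          have h1 : (2:ℚ)^i ≤ 2^(k-1) := pow_le_pow_right₀ (by norm_num) (by omega)
          have h2 : (2:ℚ)^(n-k+1) * 2^(k-1) = 2^n := by
            rw [← pow_add]; congr 1; omega
          have h3 : (0:ℚ) < 2^(n-k+1) := by positivity
          have h4 : (0:ℚ) ≤ (2:ℚ)^i := by positivity
          have h5 : (2:ℚ)^(n-k+1) * 2^k = 2 * 2^n := by
            rw [← pow_add]
            have : n-k+1+k = n+1 := by omega
            rw [this, pow_succ]; ring
          have h6 := mul_le_mul_of_nonneg_left h1 (le_of_lt h3)
          nlinarith [h2, h5, h6, h4]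
    _ = 2^(k*(n-k+1)) := by
        rw [Finset.prod_const, Finset.card_range, ← pow_mul, mul_comm]

set_option maxHeartbeats 2000000 in
lemma term_le (n k : ℕ) (hn : 7 ≤ n) (hk : k + 2 ≤ n) :
    Tterm n k ≤ 2^(3*2^(n-1)+2) * ((2^(n-1)).factorial : ℚ) := by
  have hgb : (gb n k)^2 ≤ (2:ℚ)^(2*(k*(n-k+1))) := by
    have h1 := pow_le_pow_left₀ (gb_nonneg n k (by omega)) (gb_le n k (by omega)) 2
    calc (gb n k)^2 ≤ ((2:ℚ)^(k*(n-k+1)))^2 := h1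
    _ = (2:ℚ)^(2*(k*(n-k+1))) := by rw [← pow_mul, mul_comm]
  have hprod : ∏ i ∈ Finset.range (n-k), ((2:ℚ)^(n-k) - 2^i)^(2^k)
      ≤ (2:ℚ)^((n-k)*2^k*(n-k)) := by
    calc ∏ i ∈ Finset.range (n-k), ((2:ℚ)^(n-k) - 2^i)^(2^k)
        ≤ ∏ _i ∈ Finset.range (n-k), ((2:ℚ)^((n-k)*2^k)) := by
          apply Finset.prod_le_prod
          · intro i hi
            exact pow_nonneg (two_pow_sub_nonneg (le_of_lt (Finset.mem_range.mp hi))) _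
          · intro i hi
            have hik := Finset.mem_range.mp hi
            rw [pow_mul]
            apply pow_le_pow_left₀ (two_pow_sub_nonneg (le_of_lt hik))
            have : (0:ℚ) ≤ 2^i := by positivity
            linarith
      _ = (2:ℚ)^((n-k)*2^k*(n-k)) := by
          rw [Finset.prod_const, Finset.card_range, ← pow_mul]
  have hfin : (2:ℚ)^(2*(k*(n-k+1))) * 2^((n-k)^2) * (2^k).factorial * 2^((2*n-2*k+1)*2^k)
        * 2^((n-k)*2^k*(n-k))
      ≤ 2^(3*2^(n-1)+2) * ((2^(n-1)).factorial : ℚ) := by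
    have h := nat_bound n k hn hk
    have hQ := (Nat.cast_le (α := ℚ)).mpr h
    push_cast at hQ
    rw [pow_add, pow_add, pow_add] at hQ
    calc (2:ℚ)^(2*(k*(n-k+1))) * 2^((n-k)^2) * (2^k).factorial * 2^((2*n-2*k+1)*2^k)
          * 2^((n-k)*2^k*(n-k))
        = (2:ℚ)^(2*(k*(n-k+1))) * 2^((n-k)^2) * 2^((2*n-2*k+1)*2^k) * 2^((n-k)*2^k*(n-k))
            * ((2^k).factorial : ℕ) := by ring
      _ ≤ _ := by linarith [hQ]
  -- now chain
  have hnn1 : (0:ℚ) ≤ (gb n k)^2 := sq_nonneg _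
  have hprod_nn : 0 ≤ ∏ i ∈ Finset.range (n-k), ((2:ℚ)^(n-k) - 2^i)^(2^k) := by
    apply Finset.prod_nonneg
    intro i hi
    exact pow_nonneg (two_pow_sub_nonneg (le_of_lt (Finset.mem_range.mp hi))) _
  calc Tterm n k
      ≤ (2:ℚ)^(2*(k*(n-k+1))) * 2^((n-k)^2) * (2^k).factorial * 2^((2*n-2*k+1)*2^k)
        * 2^((n-k)*2^k*(n-k)) := by
        unfold Tterm
        apply mul_le_mul
        · apply mul_le_mul_of_nonneg_right
          apply mul_le_mul_of_nonneg_right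
          apply mul_le_mul_of_nonneg_right hgb
          all_goals positivity
        · exact hprod
        · exact hprod_nn
        · positivity
    _ ≤ _ := hfin


lemma lower_bound (m : ℕ) :
    ((2:ℚ)^(m+1) - 1)^2 * 2^(3*2^m+1) * (2^m).factorial ≤ Bfun (m+1) := by
  rw [Bfun_eq, ← Tterm_top]
  exact Finset.single_le_sum (fun i _ => Tterm_nonneg _ i) (Finset.self_mem_range_succ m)

set_option maxHeartbeats 4000000 in
theorem stmt_13 (n : ℕ) :
    (1 ≤ n → ((2:ℚ)^n - 1)^2 * 2^(3*2^(n-1)+1) * (2^(n-1)).factorial ≤ Bfun n) ∧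
    (7 ≤ n → Bfun n < 2^(3*2^(n-1)+2*n+1) * (2^(n-1)).factorial) := by
  constructor
  · intro h
    obtain ⟨m, rfl⟩ : ∃ m, n = m + 1 := ⟨n - 1, by omega⟩
    simpa using lower_bound m
  · intro h
    obtain ⟨m, rfl⟩ : ∃ m, n = m + 1 := ⟨n - 1, by omega⟩
    have hm : 6 ≤ m := by omega
    simp only [Nat.add_sub_cancel]
    rw [Bfun_eq, Finset.sum_range_succ, Tterm_top]
    have hF : (0:ℚ) < (2^m).factorial := by
      exact_mod_cast Nat.factorial_pos (2^m)
    have hA : ∑ k ∈ Finset.range m, Tterm (m+1) k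
        ≤ (2:ℚ)^m * (2^(3*2^m+2) * ((2^m).factorial : ℚ)) := by
      have hstep : ∀ k ∈ Finset.range m, Tterm (m+1) k
          ≤ (2:ℚ)^(3*2^m+2) * ((2^m).factorial : ℚ) := by
        intro k hk
        have := term_le (m+1) k (by omega) (by have := Finset.mem_range.mp hk; omega)
        simpa using this
      have h1 := Finset.sum_le_sum hstep
      rw [Finset.sum_const, Finset.card_range, nsmul_eq_mul] at h1
      have hcast : (m:ℚ) ≤ (2:ℚ)^m := by exact_mod_cast (Nat.lt_two_pow_self (n := m)).le
      have hpos : (0:ℚ) ≤ (2:ℚ)^(3*2^m+2) * ((2^m).factorial : ℚ) := by positivity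
      exact le_trans h1 (mul_le_mul_of_nonneg_right hcast hpos)
    have key : (2:ℚ)^m * 2^(3*2^m+2) + ((2:ℚ)^(m+1)-1)^2 * 2^(3*2^m+1)
        < 2^(3*2^m+2*(m+1)+1) := by
      have e1 : (2:ℚ)^m * 2^(3*2^m+2) = 2^(m+1) * 2^(3*2^m+1) := by
        rw [← pow_add, ← pow_add]; congr 1; ring
      have e2 : (2:ℚ)^(3*2^m+2*(m+1)+1) = 2^(m+1)*2^(m+1)*2^(3*2^m+1) := by
        rw [← pow_add, ← pow_add]; congr 1; ring
      rw [e1, e2]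
      have hy : (2:ℚ) ≤ 2^(m+1) := by
        calc (2:ℚ) = 2^1 := by norm_num
        _ ≤ 2^(m+1) := pow_le_pow_right₀ (by norm_num) (by omega)
      have hc : (0:ℚ) < 2^(3*2^m+1) := by positivity
      nlinarith [mul_pos hc (show (0:ℚ) < 2^(m+1) - 1 by linarith)]
    calc ∑ k ∈ Finset.range m, Tterm (m+1) k
          + ((2:ℚ)^(m+1) - 1)^2 * 2^(3*2^m+1) * (2^m).factorial
        ≤ (2:ℚ)^m * (2^(3*2^m+2) * ((2^m).factorial : ℚ))
          + ((2:ℚ)^(m+1) - 1)^2 * 2^(3*2^m+1) * (2^m).factorial := by linarith [hA]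
      _ = ((2:ℚ)^m * 2^(3*2^m+2) + ((2:ℚ)^(m+1)-1)^2 * 2^(3*2^m+1)) * (2^m).factorial := by
          ring
      _ < 2^(3*2^m+2*(m+1)+1) * (2^m).factorial := by
          exact mul_lt_mul_of_pos_right key hF
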